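/- arXiv:1007.1617 — 5 statements merged into one kernel-verified Lean document; each statement's English description precedes it below -/
import Mathlib

section
/- Let β > 0 and let (x, y) solve x'(s) = x(s)y(s) + 1, y'(s) = -x(s)^2 + β² on ℝ with x(0) > 0. Then (x(s), y(s)) → (β, -1/β) as s → +∞. In other words, the fixed point (β, -1/β) is asymptotically stable in the whole right half-plane. -/
set_option maxHeartbeats 1600000
set_option linter.unreachableTactic false
set_option linter.unusedTactic false

open Filter Set

lemma aux_lowV (β t : ℝ) (hβ : 0 < β) (ht : 0 < t) :
    (t-β)^2/2 ≤ (t^2/2 - β^2*Real.log t) - (β^2/2 - β^2*Real.log β) := by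
  have h := Real.log_le_sub_one_of_pos (show 0 < t/β by positivity)
  rw [Real.log_div ht.ne' hβ.ne'] at h
  have h2 : β^2 * (Real.log t - Real.log β) ≤ β^2 * (t/β - 1) :=
    mul_le_mul_of_nonneg_left h (by positivity)
  have h3 : β^2 * (t/β - 1) = β*t - β^2 := by field_simp
  nlinarith [h2, h3]

lemma aux_upV (β a t : ℝ) (hβ : 0 < β) (ha : 0 < a) (hat : a ≤ t) :
    (t^2/2 - β^2*Real.log t) - (β^2/2 - β^2*Real.log β) ≤ (1/2 + β/a)*(t-β)^2 := by
  have ht : 0 < t := lt_of_lt_of_le ha hat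
  have h := Real.log_le_sub_one_of_pos (show 0 < β/t by positivity)
  rw [Real.log_div hβ.ne' ht.ne'] at h
  have h2 : β^2 * (Real.log β - Real.log t) ≤ β^2 * (β/t - 1) :=
    mul_le_mul_of_nonneg_left h (by positivity)
  have h3 : β^2 * (β/t - 1) = β*(t-β)^2/t - (β*t - β^2) := by field_simp; ring
  have h4 : β*(t-β)^2/t ≤ β*(t-β)^2/a := by
    apply div_le_div_of_nonneg_left ?_ ha hat; positivity
  have h5 : β*(t-β)^2/a = (β/a)*(t-β)^2 := by ring
  nlinarith [h2, h3, h4, h5]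

-- cross term bound |ε W (X²-β²)| ≤ ε W²/2 + ε (b+β)² (X-β)²/2
lemma aux_cross (β b ε X W : ℝ) (hβ : 0 < β) (hX : 0 < X) (hXb : X ≤ b) (hε0 : 0 ≤ ε) :
    |ε*(W*(X^2-β^2))| ≤ ε*W^2/2 + ε*(b+β)^2*(X-β)^2/2 := by
  have h1 : (X^2-β^2)^2 ≤ (b+β)^2*(X-β)^2 := by
    have h2 : (X+β)^2 ≤ (b+β)^2 := by nlinarith
    nlinarith [mul_le_mul_of_nonneg_right h2 (sq_nonneg (X-β))]
  have k1 : 0 ≤ ε*(W - (X^2-β^2))^2 := mul_nonneg hε0 (sq_nonneg _)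
  have k2 : 0 ≤ ε*(W + (X^2-β^2))^2 := mul_nonneg hε0 (sq_nonneg _)
  have k3 : 0 ≤ ε*((b+β)^2*(X-β)^2 - (X^2-β^2)^2) := mul_nonneg hε0 (sub_nonneg.2 h1)
  rw [abs_le]
  constructor
  · nlinarith [k2, k3]
  · nlinarith [k1, k3]

lemma aux_upper (β a b ε X W : ℝ) (hβ : 0 < β) (ha : 0 < a) (haX : a ≤ X) (hXb : X ≤ b)
    (hε0 : 0 ≤ ε) (hε4 : 2*ε ≤ 1) :
    W^2/2 + ((X^2/2 - β^2*Real.log X) - (β^2/2 - β^2*Real.log β)) + ε*(W*(X^2-β^2))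
      ≤ (1 + β/a + ε*(b+β)^2) * (W^2 + (X-β)^2) := by
  have hX : 0 < X := lt_of_lt_of_le ha haX
  have h1 := aux_upV β a X hβ ha haX
  have h2 := aux_cross β b ε X W hβ hX hXb hε0
  have h3 := le_of_abs_le h2
  have hba : 0 ≤ β/a := by positivity
  have h5 : ε*W^2 ≤ W^2 := by nlinarith [sq_nonneg W]
  linarith [sq_nonneg W, sq_nonneg (X-β), mul_nonneg hba (sq_nonneg W), mul_nonneg hba (sq_nonneg (X-β)),
    mul_nonneg (mul_nonneg hε0 (sq_nonneg (b+β))) (sq_nonneg W),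
    mul_nonneg (mul_nonneg hε0 (sq_nonneg (b+β))) (sq_nonneg (X-β))]

lemma aux_lower (β a b ε X W : ℝ) (hβ : 0 < β) (ha : 0 < a) (haX : a ≤ X) (hXb : X ≤ b)
    (hε0 : 0 ≤ ε) (hε3 : 2*(b+β)^2*ε ≤ 1) (hε4 : 2*ε ≤ 1) :
    W^2/4 + (X-β)^2/4
      ≤ W^2/2 + ((X^2/2 - β^2*Real.log X) - (β^2/2 - β^2*Real.log β)) + ε*(W*(X^2-β^2)) := by
  have hX : 0 < X := lt_of_lt_of_le ha haX
  have h1 := aux_lowV β X hβ hX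
  have h2 := aux_cross β b ε X W hβ hX hXb hε0
  have h3 := neg_le_of_abs_le h2
  nlinarith [sq_nonneg W, sq_nonneg (X-β),
    mul_nonneg (mul_nonneg hε0 (sq_nonneg (b+β))) (sq_nonneg (X-β))]

lemma aux_main (β a b ε c X W : ℝ) (hβ : 0 < β) (ha : 0 < a) (hX : 0 < X)
    (haX : a ≤ X) (hXb : X ≤ b)
    (hε0 : 0 < ε) (hε1 : 8*b^3*ε ≤ 1) (hε2 : 2*ε ≤ a)
    (hc0 : 0 ≤ c) (hc1 : 2*b*c ≤ 1) (hc2 : 2*c ≤ ε*β^2) :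
    -W^2/X + ε*((β^2 - X^2 - W/X)*(X^2-β^2) + W*(2*X*(X*W)))
      ≤ -c*(W^2 + (X-β)^2) := by
  have hb : 0 < b := lt_of_lt_of_le (lt_of_lt_of_le ha haX) hXb
  set Z := X^2 - β^2 with hZ
  have hid : -W^2/X + ε*((β^2 - X^2 - W/X)*(X^2-β^2) + W*(2*X*(X*W)))
      = (-W^2 - ε*X*Z^2 - ε*(W*Z) + 2*ε*X^3*W^2)/X := by
    field_simp
    ring
  rw [hid, div_le_iff₀ hX]; clear hid
  -- polynomial goal:  Gpoly ≤ (-c*(W²+(X-β)²))*X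
  -- prove 2a-scaled version then divide
  have hX3 : X^3 ≤ b^3 := pow_le_pow_left₀ hX.le hXb 3
  have t1 : -(2*a*ε)*(W*Z) ≤ ε*W^2 + ε*a^2*Z^2 := by
    nlinarith [mul_nonneg hε0.le (sq_nonneg (W + a*Z))]
  have t2 : ε*a^2*Z^2 ≤ ε*a*X*Z^2 := by
    nlinarith [mul_nonneg (mul_nonneg (mul_nonneg hε0.le ha.le) (sq_nonneg Z)) (sub_nonneg.2 haX)]
  have t3 : 2*a*(2*ε*X^3*W^2) ≤ a*W^2/2 := by
    nlinarith [mul_nonneg (mul_nonneg ha.le (mul_nonneg hε0.le (sq_nonneg W))) (sub_nonneg.2 hX3),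
      mul_nonneg (mul_nonneg ha.le (sq_nonneg W)) (sub_nonneg.2 hε1)]
  have t4 : ε*W^2 ≤ (a/2)*W^2 := by nlinarith [sq_nonneg W]
  have t7 : 0 ≤ (1 - 2*c*X) * (a*W^2) := by
    have : 2*c*X ≤ 1 := by nlinarith [mul_nonneg hc0 (sub_nonneg.2 hXb)]
    exact mul_nonneg (by linarith) (by positivity)
  have t8 : 0 ≤ (ε*Z^2 - 2*c*(X-β)^2) * (a*X) := by
    have hββ : β^2 ≤ (X+β)^2 := by nlinarith
    have hZZ : Z^2 = (X-β)^2*(X+β)^2 := by rw [hZ]; ring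
    have : 2*c*(X-β)^2 ≤ ε*Z^2 := by
      rw [hZZ]
      nlinarith [mul_nonneg hε0.le (sq_nonneg (X-β)),
        mul_le_mul_of_nonneg_left hββ (mul_nonneg hε0.le (sq_nonneg (X-β)))]
    exact mul_nonneg (by linarith) (by positivity)
  have tmain : (-W^2 - ε*X*Z^2 - ε*(W*Z) + 2*ε*X^3*W^2) * (2*a)
      ≤ (-c*(W^2 + (X-β)^2)*X) * (2*a) := by linarith [t1, t2, t3, t4, t7, t8]
  exact le_of_mul_le_mul_right tmain (by positivity)

lemma aux_anti {f f' : ℝ → ℝ} (h : ∀ s, 0 ≤ s → HasDerivAt f (f' s) s)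
    (h' : ∀ s, 0 ≤ s → f' s ≤ 0) : ∀ s, 0 ≤ s → f s ≤ f 0 := by
  have hmem : ∀ s ∈ interior (Ici (0:ℝ)), (0:ℝ) ≤ s := by
    rw [interior_Ici]; exact fun s hs => le_of_lt hs
  have hanti : AntitoneOn f (Ici 0) := antitoneOn_of_deriv_nonpos (convex_Ici 0)
    (fun s hs => (h s hs).continuousAt.continuousWithinAt)
    (fun s hs => ((h s (hmem s hs)).differentiableAt).differentiableWithinAt)
    (fun s hs => by rw [(h s (hmem s hs)).deriv]; exact h' s (hmem s hs))
  exact fun s hs => hanti self_mem_Ici hs hs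

lemma aux_pos (β : ℝ) (x y : ℝ → ℝ)
    (hx : ∀ s, HasDerivAt x (x s * y s + 1) s)
    (hy : ∀ s, HasDerivAt y (-(x s) ^ 2 + β ^ 2) s)
    (h0 : 0 < x 0) : ∀ s, 0 ≤ s → 0 < x s := by
  have hyc : Continuous y := continuous_iff_continuousAt.2
    fun s => (hy s).differentiableAt.continuousAt
  set Y : ℝ → ℝ := fun u => ∫ t in (0:ℝ)..u, y t with hYdef
  have hY : ∀ s, HasDerivAt Y (y s) s := fun s =>
    intervalIntegral.integral_hasDerivAt_right (hyc.intervalIntegrable 0 s)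
      hyc.aestronglyMeasurable.stronglyMeasurableAtFilter
      hyc.continuousAt
  set z : ℝ → ℝ := fun u => x u * Real.exp (-(Y u)) with hzdef
  have hz : ∀ s, HasDerivAt z (Real.exp (-(Y s))) s := by
    intro s
    have h1 : HasDerivAt (fun u => Real.exp (-(Y u))) (Real.exp (-(Y s)) * -(y s)) s :=
      ((hY s).neg).exp
    have h2 := (hx s).mul h1
    refine h2.congr_deriv ?_
    ring
  have hmono : StrictMono z := strictMono_of_deriv_pos
    (fun t => by rw [(hz t).deriv]; positivity)
  intro s hs
  have h1 : z 0 ≤ z s := hmono.monotone hs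
  have h2 : z 0 = x 0 := by simp [hzdef, hYdef]
  have h3 : 0 < z s := lt_of_lt_of_le (h2 ▸ h0) h1
  simp only [hzdef] at h3
  have h4 := Real.exp_pos (-(Y s))
  nlinarith [h3, h4]

/-- For `β > 0`, if `(x, y)` solves `x' = xy + 1`, `y' = -x² + β²`
on `ℝ` with `x(0) > 0`, then `(x(s), y(s)) → (β, -1/β)` as `s → +∞`: the fixed point
is asymptotically stable in the whole right half-plane. -/
theorem stmt_15 (β : ℝ) (hβ : 0 < β) (x y : ℝ → ℝ)
    (hx : ∀ s, HasDerivAt x (x s * y s + 1) s)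
    (hy : ∀ s, HasDerivAt y (-(x s) ^ 2 + β ^ 2) s)
    (h0 : 0 < x 0) :
    Tendsto (fun s => (x s, y s)) atTop (nhds (β, -1 / β)) := by
  have hpos := aux_pos β x y hx hy h0
  set w : ℝ → ℝ := fun s => y s + 1 / x s with hwdef
  set E : ℝ → ℝ := fun s => (w s)^2/2 + (x s)^2/2 - β^2*Real.log (x s) with hEdef
  -- derivative of w
  have hw : ∀ s, x s ≠ 0 → HasDerivAt w (β^2 - (x s)^2 - w s / x s) s := by
    intro s hne
    have h1 : HasDerivAt (fun u => 1 / x u) ((0 * x s - 1 * (x s * y s + 1)) / (x s)^2) s :=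
      (hasDerivAt_const s 1).div (hx s) hne
    have h2 := (hy s).add h1
    refine h2.congr_deriv ?_
    simp only [hwdef]
    field_simp
    ring
  -- derivative of E
  have hE : ∀ s, 0 < x s → HasDerivAt E (-(w s)^2 / x s) s := by
    intro s hxs
    have hne := hxs.ne'
    have h1 := ((hw s hne).pow 2).div_const 2
    have h2 := ((hx s).pow 2).div_const 2
    have h3 := ((hx s).log hne).const_mul (β^2)
    have h4 := (h1.add h2).sub h3
    refine h4.congr_deriv ?_
    simp only [hwdef]
    norm_num
    field_simp
    ring
  -- E is nonincreasing on [0,∞)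
  have hEanti : ∀ s, 0 ≤ s → E s ≤ E 0 := by
    refine aux_anti (f' := fun s => -(w s)^2 / x s) (fun s hs => hE s (hpos s hs)) ?_
    intro s hs
    exact div_nonpos_iff.2 (Or.inr ⟨neg_nonpos.2 (sq_nonneg _), (hpos s hs).le⟩)
  clear_value w
  obtain ⟨e0, he0⟩ : ∃ v : ℝ, v = (w 0)^2/2 + (x 0)^2/2 - β^2*Real.log (x 0) := ⟨_, rfl⟩
  have hVle : ∀ s, 0 ≤ s → (x s)^2/2 - β^2*Real.log (x s) ≤ e0 := by
    intro s hs
    have h := hEanti s hs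
    simp only [hEdef] at h
    rw [he0]
    nlinarith [sq_nonneg (w s)]
  -- bounds a ≤ x s ≤ b for s ≥ 0
  obtain ⟨a, hadef⟩ : ∃ v : ℝ, v = Real.exp (-e0/β^2) := ⟨_, rfl⟩
  have ha : 0 < a := hadef ▸ Real.exp_pos _
  obtain ⟨D, hDdef⟩ : ∃ v : ℝ, v = β^4 + 2*|e0| := ⟨_, rfl⟩
  have hD : 0 ≤ D := by rw [hDdef]; positivity
  obtain ⟨b, hbdef⟩ : ∃ v : ℝ, v = β^2 + Real.sqrt D := ⟨_, rfl⟩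
  have hb : 0 < b := by
    have h1 := Real.sqrt_nonneg D
    have h2 : (0:ℝ) < β^2 := by positivity
    rw [hbdef]; linarith
  have haX : ∀ s, 0 ≤ s → a ≤ x s := by
    intro s hs
    have hxp := hpos s hs
    have h := hVle s hs
    have hlog : -e0/β^2 ≤ Real.log (x s) := by
      rw [div_le_iff₀ (by positivity : (0:ℝ) < β^2)]
      nlinarith [sq_nonneg (x s)]
    calc a = Real.exp (-e0/β^2) := hadef
      _ ≤ Real.exp (Real.log (x s)) := Real.exp_le_exp.2 hlog
      _ = x s := Real.exp_log hxp
  have hXb : ∀ s, 0 ≤ s → x s ≤ b := by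
    intro s hs
    have hxp := hpos s hs
    have h := hVle s hs
    have hlog := Real.log_le_sub_one_of_pos hxp
    have h2 : (x s - β^2)^2 ≤ D := by
      rw [hDdef]
      nlinarith [mul_le_mul_of_nonneg_left hlog (sq_nonneg β), le_abs_self e0]
    have h4 := Real.sqrt_le_sqrt h2
    rw [Real.sqrt_sq_eq_abs] at h4
    have h5 := le_trans (le_abs_self _) h4
    rw [hbdef]; linarith
  -- choose ε
  obtain ⟨ε, hεdef⟩ : ∃ v : ℝ,
      v = min (min (1/(8*b^3)) (a/2)) (min (1/(2*(b+β)^2)) (1/2)) := ⟨_, rfl⟩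
  have hε0 : 0 < ε := by
    rw [hεdef]
    refine lt_min (lt_min ?_ ?_) (lt_min ?_ ?_) <;> positivity
  have hε1 : ε ≤ 1/(8*b^3) := hεdef ▸ le_trans (min_le_left _ _) (min_le_left _ _)
  have hε1' : 8*b^3*ε ≤ 1 := by
    rw [le_div_iff₀ (by positivity : (0:ℝ) < 8*b^3)] at hε1; linarith
  have hε2 : 2*ε ≤ a := by
    have h : ε ≤ a/2 := hεdef ▸ le_trans (min_le_left _ _) (min_le_right _ _)
    linarith
  have hε3 : 2*(b+β)^2*ε ≤ 1 := by
    have h : ε ≤ 1/(2*(b+β)^2) := hεdef ▸ le_trans (min_le_right _ _) (min_le_left _ _)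
    rw [le_div_iff₀ (by positivity : (0:ℝ) < 2*(b+β)^2)] at h; linarith
  have hε4 : 2*ε ≤ 1 := by
    have h : ε ≤ 1/2 := hεdef ▸ le_trans (min_le_right _ _) (min_le_right _ _)
    linarith
  -- constants
  obtain ⟨c, hcdef⟩ : ∃ v : ℝ, v = min (1/(2*b)) (ε*β^2/2) := ⟨_, rfl⟩
  have hc0 : 0 < c := hcdef ▸ lt_min (by positivity) (by positivity)
  have hc1 : 2*b*c ≤ 1 := by
    have h : c ≤ 1/(2*b) := hcdef ▸ min_le_left _ _
    rw [le_div_iff₀ (by positivity : (0:ℝ) < 2*b)] at h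
    linarith
  have hc2 : 2*c ≤ ε*β^2 := by
    have h : c ≤ ε*β^2/2 := hcdef ▸ min_le_right _ _
    linarith
  obtain ⟨C, hCdef⟩ : ∃ v : ℝ, v = 1 + β/a + ε*(b+β)^2 := ⟨_, rfl⟩
  have hC : 0 < C := by rw [hCdef]; positivity
  obtain ⟨k, hkdef⟩ : ∃ v : ℝ, v = c/C := ⟨_, rfl⟩
  have hk : 0 < k := by rw [hkdef]; positivity
  obtain ⟨Vb, hVbdef⟩ : ∃ v : ℝ, v = β^2/2 - β^2*Real.log β := ⟨_, rfl⟩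
  -- Lyapunov function F
  set F : ℝ → ℝ := fun s => E s + ε*(w s * ((x s)^2 - β^2)) with hFdef
  set DF : ℝ → ℝ := fun s => -(w s)^2 / x s
    + ε*((β^2 - (x s)^2 - w s / x s) * ((x s)^2 - β^2)
        + w s * (2 * x s ^ 1 * (x s * y s + 1))) with hDFdef
  have hF : ∀ s, 0 < x s → HasDerivAt F (DF s) s := by
    intro s hxs
    have hne := hxs.ne'
    have h1 := (hw s hne).mul (((hx s).pow 2).sub_const (β^2))
    have h2 := (hE s hxs).add (h1.const_mul ε)
    refine h2.congr_deriv ?_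
    try (simp only [hDFdef, Pi.pow_apply]; ring)
  -- pointwise differential inequality
  have hDFle : ∀ s, 0 ≤ s → DF s ≤ -k * (F s - Vb) := by
    intro s hs
    have hxp := hpos s hs
    have hne := hxp.ne'
    have haXs := haX s hs
    have hXbs := hXb s hs
    have hmain := aux_main β a b ε c (x s) (w s) hβ ha hxp haXs hXbs hε0 hε1' hε2 hc0.le hc1 hc2
    have hxyw : x s * y s + 1 = x s * w s := by
      simp only [hwdef]; field_simp
    have h1 : DF s ≤ -c*((w s)^2 + (x s - β)^2) := by
      have hDFeq : DF s = -(w s)^2/(x s)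
          + ε*((β^2 - (x s)^2 - (w s)/(x s))*((x s)^2-β^2)
              + (w s)*(2*(x s)*((x s)*(w s)))) := by
        simp only [hDFdef, hxyw]; ring
      rw [hDFeq]; exact hmain
    have h2 : F s - Vb ≤ C*((w s)^2 + (x s - β)^2) := by
      have h := aux_upper β a b ε (x s) (w s) hβ ha haXs hXbs hε0.le hε4
      simp only [hFdef, hEdef]
      rw [hVbdef, hCdef]
      linarith
    have hkC : k*C = c := by
      rw [hkdef]; field_simp
    have h3 : k*(F s - Vb) ≤ c*((w s)^2 + (x s - β)^2) := by
      calc k*(F s - Vb) ≤ k*(C*((w s)^2 + (x s - β)^2)) :=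
            mul_le_mul_of_nonneg_left h2 hk.le
        _ = c*((w s)^2 + (x s - β)^2) := by rw [← mul_assoc, hkC]
    linarith
  -- Gronwall
  set G : ℝ → ℝ := fun s => (F s - Vb) * Real.exp (k*s) with hGdef
  have hG : ∀ s, 0 ≤ s → HasDerivAt G ((DF s + k*(F s - Vb)) * Real.exp (k*s)) s := by
    intro s hs
    have h1 : HasDerivAt (fun u => Real.exp (k*u)) (Real.exp (k*s) * (k*1)) s :=
      ((hasDerivAt_id s).const_mul k).exp
    have h2 := ((hF s (hpos s hs)).sub_const Vb).mul h1
    refine h2.congr_deriv ?_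
    ring
  have hGanti : ∀ s, 0 ≤ s → G s ≤ G 0 := by
    refine aux_anti hG ?_
    intro s hs
    have h := hDFle s hs
    have h4 : DF s + k*(F s - Vb) ≤ 0 := by linarith
    exact mul_nonpos_iff.2 (Or.inr ⟨h4, (Real.exp_pos _).le⟩)
  clear_value F DF G
  obtain ⟨f0, hf0⟩ : ∃ v : ℝ, v = F 0 - Vb := ⟨_, rfl⟩
  have hdecay : ∀ s, 0 ≤ s → F s - Vb ≤ f0 * Real.exp (-(k*s)) := by
    intro s hs
    have h1 := hGanti s hs
    have hG0 : G 0 = f0 := by rw [hGdef, hf0]; simp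
    rw [hG0] at h1
    have h2 : (F s - Vb) * Real.exp (k*s) ≤ f0 := by
      rw [hGdef] at h1; exact h1
    have h3 := mul_le_mul_of_nonneg_right h2 (Real.exp_pos (-(k*s))).le
    rw [mul_assoc, ← Real.exp_add] at h3
    simpa using h3
  -- quantitative bounds
  have hbound : ∀ s, 0 ≤ s → (x s - β)^2 ≤ 4*(f0 * Real.exp (-(k*s)))
      ∧ (w s)^2 ≤ 4*(f0 * Real.exp (-(k*s))) := by
    intro s hs
    have hlow := aux_lower β a b ε (x s) (w s) hβ ha (haX s hs) (hXb s hs) hε0.le hε3 hε4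
    have hdec := hdecay s hs
    have hFs : F s - Vb = (w s)^2/2 + (((x s)^2/2 - β^2*Real.log (x s))
        - (β^2/2 - β^2*Real.log β)) + ε*(w s*((x s)^2-β^2)) := by
      rw [hFdef, hEdef, hVbdef]; ring
    rw [hFs] at hdec
    constructor <;> nlinarith [sq_nonneg (w s), sq_nonneg (x s - β)]
  -- limits
  have hexp : Tendsto (fun s : ℝ => 4*(f0 * Real.exp (-(k*s)))) atTop (nhds 0) := by
    have h1 : Tendsto (fun s : ℝ => k*s) atTop atTop :=
      tendsto_id.const_mul_atTop hk
    have h1' : Tendsto (fun s : ℝ => -(k*s)) atTop atBot := tendsto_neg_atTop_atBot.comp h1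
    have h2 : Tendsto (fun s : ℝ => Real.exp (-(k*s))) atTop (nhds 0) :=
      Real.tendsto_exp_atBot.comp h1'
    have h3 := h2.const_mul (4*f0)
    rw [mul_zero] at h3
    convert h3 using 2 with s
    ring
  have hsq : ∀ (f : ℝ → ℝ), (∀ s, 0 ≤ s → (f s)^2 ≤ 4*(f0 * Real.exp (-(k*s)))) →
      Tendsto f atTop (nhds 0) := by
    intro f hf
    have h1 : Tendsto (fun s => (f s)^2) atTop (nhds 0) := by
      refine tendsto_of_tendsto_of_tendsto_of_le_of_le' tendsto_const_nhds hexp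
        (Eventually.of_forall fun s => sq_nonneg _) ?_
      filter_upwards [eventually_ge_atTop (0:ℝ)] with s hs using hf s hs
    have h2 : Tendsto (fun s => |f s|) atTop (nhds 0) := by
      have h3 := h1.sqrt
      rw [Real.sqrt_zero] at h3
      convert h3 using 2 with s
      rw [Real.sqrt_sq_eq_abs]
    exact tendsto_zero_iff_abs_tendsto_zero f |>.2 h2
  have hxlim : Tendsto x atTop (nhds β) := by
    have h1 := hsq (fun s => x s - β) (fun s hs => (hbound s hs).1)
    have h2 := h1.add_const β
    simpa using h2
  have hwlim : Tendsto w atTop (nhds 0) := hsq w (fun s hs => (hbound s hs).2)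
  have hylim : Tendsto y atTop (nhds (-1/β)) := by
    have hinv : Tendsto (fun s => 1 / x s) atTop (nhds (1/β)) := by
      have h := hxlim.inv₀ hβ.ne'
      simpa [one_div] using h
    have h2 := hwlim.sub hinv
    have h3 : (fun s => w s - 1/x s) = y := by
      funext s; simp only [hwdef]; ring
    rw [h3, show (0:ℝ) - 1/β = -1/β by ring] at h2
    exact h2
  exact hxlim.prodMk_nhds hylim
end

section
/- Let (x, y) solve x'(s) = x(s)y(s), y'(s) = -x(s)^2 + 1 on ℝ (the system with A = 0, B = -1). Then the function s ↦ x(s)·e^{-(x(s)² + y(s)²)/2} is constant. -/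
/-- If `(x, y)` solves `x' = xy`, `y' = -x² + 1` on `ℝ` (the system with
`A = 0`, `B = -1`), then `x·e^{-(x² + y²)/2}` is constant. -/
theorem stmt_16 (x y : ℝ → ℝ)
    (hx : ∀ s, HasDerivAt x (x s * y s) s)
    (hy : ∀ s, HasDerivAt y (-(x s) ^ 2 + 1) s) :
    ∀ s t : ℝ, x s * Real.exp (-((x s) ^ 2 + (y s) ^ 2) / 2) =
      x t * Real.exp (-((x t) ^ 2 + (y t) ^ 2) / 2) := by
  have key : ∀ u : ℝ, HasDerivAt
      (fun s => x s * Real.exp (-((x s) ^ 2 + (y s) ^ 2) / 2)) 0 u := by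
    intro u
    have h1 : HasDerivAt (fun s => -((x s) ^ 2 + (y s) ^ 2) / 2)
        (-(2 * x u * (x u * y u) + 2 * y u * (-(x u) ^ 2 + 1)) / 2) u := by
      exact (((((hx u).pow 2).add ((hy u).pow 2)).neg).div_const 2).congr_deriv (by ring)
    have h2 := (Real.hasDerivAt_exp _).comp u h1
    have h3 := (hx u).mul h2
    convert h3 using 1
    · rfl
    · rfl
    · rfl
    simp only [Function.comp_apply]
    ring
  intro s t
  have := fun u => (key u).deriv
  have hconst := is_const_of_deriv_eq_zero (f := fun s => x s * Real.exp (-((x s) ^ 2 + (y s) ^ 2) / 2))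
    (fun u => (key u).differentiableAt) this s t
  exact hconst
end

section
/- Let (x, y) solve x'(s) = x(s)y(s), y'(s) = -x(s)^2 + 1 on ℝ (the system with A = 0, B = -1), with x(0) > 0 and (x(0), y(0)) ≠ (1, 0). Then the solution is periodic: there exists L > 0 such that x(s + L) = x(s) and y(s + L) = y(s) for all s ∈ ℝ. -/
open Set

/-- Positivity of `x` along the flow. -/
lemma stmt17_xpos (x y : ℝ → ℝ)
    (hx : ∀ s, HasDerivAt x (x s * y s) s)
    (hy : ∀ s, HasDerivAt y (-(x s) ^ 2 + 1) s)
    (h0 : 0 < x 0) : ∀ s, 0 < x s := by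
  have hyc : Continuous y := continuous_iff_continuousAt.mpr fun s => (hy s).continuousAt
  set Y : ℝ → ℝ := fun s => ∫ t in (0:ℝ)..s, y t with hYdef
  have hY : ∀ s, HasDerivAt Y (y s) s := fun s =>
    intervalIntegral.integral_hasDerivAt_right (hyc.intervalIntegrable 0 s)
      (hyc.stronglyMeasurableAtFilter _ _) (hyc.continuousAt)
  set g : ℝ → ℝ := fun s => x s * Real.exp (-Y s) with hgdef
  have hg : ∀ s, HasDerivAt g 0 s := by
    intro s
    have h1 : HasDerivAt (fun s => Real.exp (-Y s)) (Real.exp (-Y s) * -(y s)) s :=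
      (hY s).neg.exp
    have h2 := (hx s).mul h1
    exact h2.congr_deriv (by ring)
  have hconst : ∀ s, g s = g 0 := fun s =>
    is_const_of_deriv_eq_zero (fun t => (hg t).differentiableAt) (fun t => (hg t).deriv) s 0
  intro s
  have h1 : x s * Real.exp (-Y s) = x 0 * Real.exp (-Y 0) := hconst s
  nlinarith [Real.exp_pos (-Y s), Real.exp_pos (-Y 0), mul_pos h0 (Real.exp_pos (-Y 0))]

/-- `y` has a zero beyond any time `T`. -/
lemma stmt17_exists_zero (x y : ℝ → ℝ)
    (hx : ∀ s, HasDerivAt x (x s * y s) s)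
    (hy : ∀ s, HasDerivAt y (-(x s) ^ 2 + 1) s)
    (hp : ∀ s, 0 < x s) :
    ∀ T : ℝ, ∃ s, T ≤ s ∧ y s = 0 := by
  have hyc : Continuous y := continuous_iff_continuousAt.mpr fun s => (hy s).continuousAt
  have hxc : Continuous x := continuous_iff_continuousAt.mpr fun s => (hx s).continuousAt
  intro T
  by_contra hcon
  push_neg at hcon
  have hsign : (∀ s, T ≤ s → 0 < y s) ∨ (∀ s, T ≤ s → y s < 0) := by
    rcases (hcon T le_rfl).lt_or_gt with h | h
    · right
      intro s hs
      by_contra hle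
      push_neg at hle
      have h0lt : 0 < y s := lt_of_le_of_ne hle (Ne.symm (hcon s hs))
      obtain ⟨c, hc, hc0⟩ := intermediate_value_Icc hs hyc.continuousOn
        (show (0:ℝ) ∈ Icc (y T) (y s) from ⟨h.le, h0lt.le⟩)
      exact hcon c hc.1 hc0
    · left
      intro s hs
      by_contra hle
      push_neg at hle
      have h0lt : y s < 0 := lt_of_le_of_ne hle (hcon s hs)
      obtain ⟨c, hc, hc0⟩ := intermediate_value_Icc' hs hyc.continuousOn
        (show (0:ℝ) ∈ Icc (y s) (y T) from ⟨h0lt.le, h.le⟩)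
      exact hcon c hc.1 hc0
  rcases hsign with hpos' | hneg'
  · -- y > 0 on [T, ∞) : x strictly increasing there
    have hmono : StrictMonoOn x (Ici T) :=
      strictMonoOn_of_hasDerivWithinAt_pos (convex_Ici T) hxc.continuousOn
        (fun s hs => (hx s).hasDerivWithinAt.mono interior_subset)
        (fun s hs => by
          rw [interior_Ici] at hs
          exact mul_pos (hp s) (hpos' s (le_of_lt hs)))
    by_cases hbig : ∃ t, T < t ∧ 1 < x t
    · obtain ⟨t₀, ht₀T, ht₀⟩ := hbig
      have hxge : ∀ s, t₀ ≤ s → x t₀ ≤ x s := by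
        intro s hs
        rcases eq_or_lt_of_le hs with rfl | h
        · exact le_rfl
        · exact (hmono ht₀T.le (ht₀T.le.trans hs) h).le
      set c : ℝ := (x t₀) ^ 2 - 1 with hcdef
      have hc : 0 < c := by nlinarith
      have hanti : AntitoneOn (fun s => y s + s * c) (Ici t₀) := by
        refine antitoneOn_of_hasDerivWithinAt_nonpos (convex_Ici t₀)
          (by fun_prop) (fun s hs => ((hy s).add (hasDerivAt_mul_const c)).hasDerivWithinAt.mono
            interior_subset) (fun s hs => ?_)
        rw [interior_Ici] at hs
        have h1 : x t₀ ≤ x s := hxge s hs.le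
        have h2 : 0 < x t₀ := hp t₀
        simp only [hcdef]
        nlinarith
      set s₁ : ℝ := t₀ + (y t₀ + 1) / c with hs₁def
      have hyt₀ : 0 < y t₀ := hpos' t₀ ht₀T.le
      have hs₁gt : t₀ < s₁ := by
        have : 0 < (y t₀ + 1) / c := div_pos (by linarith) hc
        simp only [hs₁def]; linarith
      have h3 : y s₁ + s₁ * c ≤ y t₀ + t₀ * c :=
        hanti (le_refl t₀ : t₀ ∈ Ici t₀) (mem_Ici.mpr hs₁gt.le) hs₁gt.le
      have h4 : (s₁ - t₀) * c = y t₀ + 1 := by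
        simp only [hs₁def]
        field_simp
        ring
      have h5 : 0 < y s₁ := hpos' s₁ (ht₀T.le.trans hs₁gt.le)
      nlinarith
    · push_neg at hbig
      set T' : ℝ := T + 1 with hT'def
      have hT'T : T < T' := by simp [hT'def]
      have hymono : MonotoneOn y (Ici T) := by
        refine monotoneOn_of_hasDerivWithinAt_nonneg (convex_Ici T) hyc.continuousOn
          (fun s hs => (hy s).hasDerivWithinAt.mono interior_subset) (fun s hs => ?_)
        rw [interior_Ici] at hs
        have h1 : x s ≤ 1 := hbig s hs
        have h2 : 0 < x s := hp s
        nlinarith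
      have hyT' : 0 < y T' := hpos' T' hT'T.le
      have hlog : ∀ s, HasDerivAt (fun t => Real.log (x t)) (y s) s := by
        intro s
        have h := (hx s).log (hp s).ne'
        convert h using 1
        rw [mul_comm, mul_div_assoc, div_self (hp s).ne', mul_one]
      have hmono2 : MonotoneOn (fun s => Real.log (x s) - s * y T') (Ici T') := by
        refine monotoneOn_of_hasDerivWithinAt_nonneg (convex_Ici T')
          ((hxc.continuousOn.log (fun t _ => (hp t).ne')).sub
            (continuousOn_id.mul continuousOn_const))
          (fun s hs => ((hlog s).sub (hasDerivAt_mul_const (y T'))).hasDerivWithinAt.mono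
            interior_subset) (fun s hs => ?_)
        rw [interior_Ici] at hs
        have := hymono (mem_Ici.mpr hT'T.le) (mem_Ici.mpr (hT'T.le.trans hs.le)) hs.le
        linarith
      set s₁ : ℝ := T' + (|Real.log (x T')| + 1) / y T' with hs₁def
      have hs₁gt : T' < s₁ := by
        have : 0 < (|Real.log (x T')| + 1) / y T' :=
          div_pos (by positivity) hyT'
        simp only [hs₁def]; linarith
      have h3 : Real.log (x T') - T' * y T' ≤ Real.log (x s₁) - s₁ * y T' :=
        hmono2 (le_refl T' : T' ∈ Ici T') (mem_Ici.mpr hs₁gt.le) hs₁gt.le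
      have h4 : (s₁ - T') * y T' = |Real.log (x T')| + 1 := by
        simp only [hs₁def]
        field_simp
        ring
      have h5 : 0 < Real.log (x s₁) := by
        have := neg_abs_le (Real.log (x T'))
        nlinarith
      have h6 : 1 < x s₁ := by
        have := Real.exp_lt_exp.mpr h5
        rwa [Real.exp_zero, Real.exp_log (hp s₁)] at this
      exact absurd (hbig s₁ (hT'T.trans hs₁gt)) (by linarith)
  · -- y < 0 on [T, ∞) : x strictly decreasing there
    have hmono : StrictAntiOn x (Ici T) :=
      strictAntiOn_of_hasDerivWithinAt_neg (convex_Ici T) hxc.continuousOn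
        (fun s hs => (hx s).hasDerivWithinAt.mono interior_subset)
        (fun s hs => by
          rw [interior_Ici] at hs
          exact mul_neg_of_pos_of_neg (hp s) (hneg' s (le_of_lt hs)))
    by_cases hsmall : ∃ t, T < t ∧ x t < 1
    · obtain ⟨t₀, ht₀T, ht₀⟩ := hsmall
      have hxle : ∀ s, t₀ ≤ s → x s ≤ x t₀ := by
        intro s hs
        rcases eq_or_lt_of_le hs with rfl | h
        · exact le_rfl
        · exact (hmono ht₀T.le (ht₀T.le.trans hs) h).le
      set c : ℝ := 1 - (x t₀) ^ 2 with hcdef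
      have hc : 0 < c := by nlinarith [hp t₀]
      have hmono3 : MonotoneOn (fun s => y s - s * c) (Ici t₀) := by
        refine monotoneOn_of_hasDerivWithinAt_nonneg (convex_Ici t₀)
          (by fun_prop) (fun s hs => ((hy s).sub (hasDerivAt_mul_const c)).hasDerivWithinAt.mono
            interior_subset) (fun s hs => ?_)
        rw [interior_Ici] at hs
        have h1 : x s ≤ x t₀ := hxle s hs.le
        have h2 : 0 < x s := hp s
        simp only [hcdef]
        nlinarith
      set s₁ : ℝ := t₀ + (1 - y t₀) / c with hs₁def
      have hyt₀ : y t₀ < 0 := hneg' t₀ ht₀T.le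
      have hs₁gt : t₀ < s₁ := by
        have : 0 < (1 - y t₀) / c := div_pos (by linarith) hc
        simp only [hs₁def]; linarith
      have h3 : y t₀ - t₀ * c ≤ y s₁ - s₁ * c :=
        hmono3 (le_refl t₀ : t₀ ∈ Ici t₀) (mem_Ici.mpr hs₁gt.le) hs₁gt.le
      have h4 : (s₁ - t₀) * c = 1 - y t₀ := by
        simp only [hs₁def]
        field_simp
        ring
      have h5 : y s₁ < 0 := hneg' s₁ (ht₀T.le.trans hs₁gt.le)
      nlinarith
    · push_neg at hsmall
      set T' : ℝ := T + 1 with hT'def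
      have hT'T : T < T' := by simp [hT'def]
      have hyanti : AntitoneOn y (Ici T) := by
        refine antitoneOn_of_hasDerivWithinAt_nonpos (convex_Ici T) hyc.continuousOn
          (fun s hs => (hy s).hasDerivWithinAt.mono interior_subset) (fun s hs => ?_)
        rw [interior_Ici] at hs
        have h1 : 1 ≤ x s := hsmall s hs
        nlinarith
      have hyT' : y T' < 0 := hneg' T' hT'T.le
      have hlog : ∀ s, HasDerivAt (fun t => Real.log (x t)) (y s) s := by
        intro s
        have h := (hx s).log (hp s).ne'
        convert h using 1
        rw [mul_comm, mul_div_assoc, div_self (hp s).ne', mul_one]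
      have hanti2 : AntitoneOn (fun s => Real.log (x s) - s * y T') (Ici T') := by
        refine antitoneOn_of_hasDerivWithinAt_nonpos (convex_Ici T')
          ((hxc.continuousOn.log (fun t _ => (hp t).ne')).sub
            (continuousOn_id.mul continuousOn_const))
          (fun s hs => ((hlog s).sub (hasDerivAt_mul_const (y T'))).hasDerivWithinAt.mono
            interior_subset) (fun s hs => ?_)
        rw [interior_Ici] at hs
        have := hyanti (mem_Ici.mpr hT'T.le) (mem_Ici.mpr (hT'T.le.trans hs.le)) hs.le
        linarith
      set s₁ : ℝ := T' + (|Real.log (x T')| + 1) / (-y T') with hs₁def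
      have hs₁gt : T' < s₁ := by
        have : 0 < (|Real.log (x T')| + 1) / (-y T') :=
          div_pos (by positivity) (by linarith)
        simp only [hs₁def]; linarith
      have h3 : Real.log (x s₁) - s₁ * y T' ≤ Real.log (x T') - T' * y T' :=
        hanti2 (le_refl T' : T' ∈ Ici T') (mem_Ici.mpr hs₁gt.le) hs₁gt.le
      have h4 : (s₁ - T') * (-y T') = |Real.log (x T')| + 1 := by
        have hne : y T' ≠ 0 := hyT'.ne
        simp only [hs₁def]
        field_simp
        ring
      have h5 : Real.log (x s₁) < 0 := by
        have := le_abs_self (Real.log (x T'))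
        nlinarith
      have h6 : x s₁ < 1 := by
        have := Real.exp_lt_exp.mpr h5
        rwa [Real.exp_zero, Real.exp_log (hp s₁)] at this
      exact absurd (hsmall s₁ (hT'T.trans hs₁gt)) (by linarith)

/-- Reflection symmetry about a time where `y` vanishes. -/
lemma stmt17_reflect (x y : ℝ → ℝ)
    (hx : ∀ s, HasDerivAt x (x s * y s) s)
    (hy : ∀ s, HasDerivAt y (-(x s) ^ 2 + 1) s)
    (σ : ℝ) (hσ : y σ = 0) :
    ∀ s, x (2 * σ - s) = x s ∧ y (2 * σ - s) = -y s := by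
  have hyc : Continuous y := continuous_iff_continuousAt.mpr fun s => (hy s).continuousAt
  have hxc : Continuous x := continuous_iff_continuousAt.mpr fun s => (hx s).continuousAt
  intro s
  set v : ℝ → ℝ × ℝ → ℝ × ℝ := fun _ p => (p.1 * p.2, -p.1 ^ 2 + 1) with hvdef
  set F : ℝ → ℝ × ℝ := fun t => (x t, y t) with hFdef
  set G : ℝ → ℝ × ℝ := fun t => (x (2 * σ - t), -y (2 * σ - t)) with hGdef
  have hF : ∀ t, HasDerivAt F (v t (F t)) t := fun t => (hx t).prodMk (hy t)
  have hr : ∀ t : ℝ, HasDerivAt (fun u : ℝ => 2 * σ - u) (-1) t := fun t => by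
    simpa using (hasDerivAt_id t).const_sub (2 * σ)
  have hG : ∀ t, HasDerivAt G (v t (G t)) t := by
    intro t
    have h1 : HasDerivAt (fun u => x (2 * σ - u))
        (x (2 * σ - t) * -y (2 * σ - t)) t := by
      have := (hx (2 * σ - t)).comp t (hr t)
      exact this.congr_deriv (by ring)
    have h2 : HasDerivAt (fun u => -y (2 * σ - u))
        (-(x (2 * σ - t)) ^ 2 + 1) t := by
      have := ((hy (2 * σ - t)).comp t (hr t)).neg
      exact this.congr_deriv (by ring)
    exact h1.prodMk h2
  have heq : F σ = G σ := by
    simp only [hFdef, hGdef]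
    have : 2 * σ - σ = σ := by ring
    rw [this, hσ]
    norm_num
  -- bounds on a compact interval
  set M : ℝ := |s - σ| + 1 with hMdef
  have hM : 0 < M := by positivity
  have hsM : |s - σ| < M := by simp [hMdef]
  set a : ℝ := σ - M with hadef
  set b : ℝ := σ + M with hbdef
  obtain ⟨R₀, hR₀⟩ := isCompact_Icc.exists_bound_of_continuousOn
    ((hxc.prodMk hyc).continuousOn : ContinuousOn F (Icc a b))
  set R : ℝ := max R₀ 0 with hRdef
  have hRnn : 0 ≤ R := le_max_right _ _
  have hFR : ∀ t ∈ Icc a b, F t ∈ Metric.closedBall (0 : ℝ × ℝ) R := by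
    intro t ht
    rw [Metric.mem_closedBall, dist_zero_right]
    exact (hR₀ t ht).trans (le_max_left _ _)
  have hGR : ∀ t ∈ Icc a b, G t ∈ Metric.closedBall (0 : ℝ × ℝ) R := by
    intro t ht
    have ht' : 2 * σ - t ∈ Icc a b := by
      constructor
      · simp only [hadef]; linarith [ht.2]
      · simp only [hbdef]; linarith [ht.1]
    rw [Metric.mem_closedBall, dist_zero_right]
    have : ‖G t‖ = ‖F (2 * σ - t)‖ := by
      simp [hGdef, hFdef, Prod.norm_def]
    rw [this]
    exact (hR₀ _ ht').trans (le_max_left _ _)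
  -- Lipschitz bound on the ball
  set K : NNReal := (2 * R).toNNReal with hKdef
  have hlip : ∀ t : ℝ, LipschitzOnWith K (v t) (Metric.closedBall (0 : ℝ × ℝ) R) := by
    intro t
    rw [lipschitzOnWith_iff_dist_le_mul]
    intro p hp q hq
    have hKcoe : (K : ℝ) = 2 * R := Real.coe_toNNReal _ (by positivity)
    have hpn : ‖p‖ ≤ R := by rwa [Metric.mem_closedBall, dist_zero_right] at hp
    have hqn : ‖q‖ ≤ R := by rwa [Metric.mem_closedBall, dist_zero_right] at hq
    have hp1 : |p.1| ≤ R := (norm_fst_le p).trans hpn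
    have hp2 : |p.2| ≤ R := (norm_snd_le p).trans hpn
    have hq1 : |q.1| ≤ R := (norm_fst_le q).trans hqn
    have hq2 : |q.2| ≤ R := (norm_snd_le q).trans hqn
    have hd1 : |p.1 - q.1| ≤ dist p q := by
      rw [Prod.dist_eq]
      exact le_trans (le_of_eq (Real.dist_eq p.1 q.1).symm) (le_max_left _ _)
    have hd2 : |p.2 - q.2| ≤ dist p q := by
      rw [Prod.dist_eq]
      exact le_trans (le_of_eq (Real.dist_eq p.2 q.2).symm) (le_max_right _ _)
    have hdnn : 0 ≤ dist p q := dist_nonneg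
    have hA : |p.1 * p.2 - q.1 * q.2| ≤ 2 * R * dist p q := by
      have h1 : p.1 * p.2 - q.1 * q.2 = p.1 * (p.2 - q.2) + q.2 * (p.1 - q.1) := by ring
      rw [h1]
      calc |p.1 * (p.2 - q.2) + q.2 * (p.1 - q.1)|
          ≤ |p.1 * (p.2 - q.2)| + |q.2 * (p.1 - q.1)| := abs_add_le _ _
        _ = |p.1| * |p.2 - q.2| + |q.2| * |p.1 - q.1| := by rw [abs_mul, abs_mul]
        _ ≤ R * dist p q + R * dist p q := by
            gcongr
        _ = 2 * R * dist p q := by ring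
    have hB : |(-p.1 ^ 2 + 1) - (-q.1 ^ 2 + 1)| ≤ 2 * R * dist p q := by
      have h1 : (-p.1 ^ 2 + 1) - (-q.1 ^ 2 + 1) = -((p.1 + q.1) * (p.1 - q.1)) := by ring
      rw [h1, abs_neg, abs_mul]
      have h2 : |p.1 + q.1| ≤ 2 * R := by
        calc |p.1 + q.1| ≤ |p.1| + |q.1| := abs_add_le _ _
          _ ≤ 2 * R := by linarith
      calc |p.1 + q.1| * |p.1 - q.1| ≤ (2 * R) * dist p q := by
            gcongr
        _ = 2 * R * dist p q := by ring
    rw [hKcoe, hvdef]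
    simp only [Prod.dist_eq]
    rw [Real.dist_eq, Real.dist_eq]
    exact max_le hA hB
  have hmemσ : σ ∈ Ioo a b := by
    constructor
    · simp only [hadef]; linarith
    · simp only [hbdef]; linarith
  have hmems : s ∈ Ioo a b := by
    rw [abs_lt] at hsM
    constructor
    · simp only [hadef]; linarith [hsM.1]
    · simp only [hbdef]; linarith [hsM.2]
  have huniq : Set.EqOn F G (Ioo a b) :=
    ODE_solution_unique_of_mem_Ioo (fun t _ => hlip t) hmemσ
      (fun t ht => ⟨hF t, hFR t (Ioo_subset_Icc_self ht)⟩)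
      (fun t ht => ⟨hG t, hGR t (Ioo_subset_Icc_self ht)⟩)
      heq
  have h := huniq hmems
  simp only [hFdef, hGdef, Prod.mk.injEq] at h
  exact ⟨h.1.symm, by linarith [h.2]⟩

/-- If `(x, y)` solves `x' = xy`, `y' = -x² + 1` on `ℝ` (the system with
`A = 0`, `B = -1`) with `x(0) > 0` and `(x(0), y(0)) ≠ (1, 0)`, then the solution is
periodic. -/
theorem stmt_17 (x y : ℝ → ℝ)
    (hx : ∀ s, HasDerivAt x (x s * y s) s)
    (hy : ∀ s, HasDerivAt y (-(x s) ^ 2 + 1) s)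
    (h0 : 0 < x 0) (hne : (x 0, y 0) ≠ (1, 0)) :
    ∃ L : ℝ, 0 < L ∧ ∀ s, x (s + L) = x s ∧ y (s + L) = y s := by
  have hp : ∀ s, 0 < x s := stmt17_xpos x y hx hy h0
  obtain ⟨s₁, hs₁T, hs₁⟩ := stmt17_exists_zero x y hx hy hp 0
  obtain ⟨s₂, hs₂T, hs₂⟩ := stmt17_exists_zero x y hx hy hp (s₁ + 1)
  refine ⟨2 * (s₂ - s₁), by linarith, fun s => ?_⟩
  have h1 := stmt17_reflect x y hx hy s₁ hs₁ s
  have h2 := stmt17_reflect x y hx hy s₂ hs₂ (s + 2 * (s₂ - s₁))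
  have e : 2 * s₂ - (s + 2 * (s₂ - s₁)) = 2 * s₁ - s := by ring
  rw [e] at h2
  constructor
  · rw [← h2.1, h1.1]
  · have := h1.2
    have := h2.2
    linarith
end

section
/- Let (x, y) solve x'(s) = x(s)y(s), y'(s) = -x(s)^2 - 1 on ℝ (the system with A = 0, B = 1), with y(0) = 0. Then x is an even function and y is an odd function: x(-s) = x(s) and y(-s) = -y(s) for all s ∈ ℝ. -/
open Set Metric

/-- If `(x, y)` solves `x' = xy`, `y' = -x² - 1` on `ℝ` (the system with
`A = 0`, `B = 1`) with `y(0) = 0`, then `x` is even and `y` is odd. -/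
theorem stmt_18 (x y : ℝ → ℝ)
    (hx : ∀ s, HasDerivAt x (x s * y s) s)
    (hy : ∀ s, HasDerivAt y (-(x s) ^ 2 - 1) s)
    (h0 : y 0 = 0) :
    ∀ s, x (-s) = x s ∧ y (-s) = -y s := by
  intro s₀
  set f : ℝ → ℝ × ℝ := fun t => (x t, y t) with hf_def
  set g : ℝ → ℝ × ℝ := fun t => (x (-t), -y (-t)) with hg_def
  set T : ℝ := |s₀| + 1 with hT_def
  have hs₀mem : s₀ ∈ Ioo (-T) T := by
    constructor <;> [nlinarith [abs_nonneg s₀, neg_abs_le s₀]; nlinarith [le_abs_self s₀]]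
  have h0mem : (0 : ℝ) ∈ Ioo (-T) T := by
    constructor <;> nlinarith [abs_nonneg s₀]
  -- continuity of f and g on the compact interval
  have hxc : Continuous x := continuous_iff_continuousAt.mpr fun t => (hx t).continuousAt
  have hyc : Continuous y := continuous_iff_continuousAt.mpr fun t => (hy t).continuousAt
  have hfc : ContinuousOn f (Icc (-T) T) := (hxc.prodMk hyc).continuousOn
  have hgc : ContinuousOn g (Icc (-T) T) :=
    ((hxc.comp continuous_neg).prodMk ((hyc.comp continuous_neg).neg)).continuousOn
  -- bound on the trajectories
  obtain ⟨M, hM⟩ := ((isCompact_Icc.image_of_continuousOn hfc).union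
    (isCompact_Icc.image_of_continuousOn hgc)).exists_bound_of_continuousOn continuousOn_id
  have hMnn : 0 ≤ M := le_trans (norm_nonneg _) (hM (f 0) (Or.inl ⟨0, mem_Icc.mpr ⟨h0mem.1.le, h0mem.2.le⟩, rfl⟩))
  have hfM : ∀ t ∈ Icc (-T) T, ‖f t‖ ≤ M := fun t ht => hM (f t) (Or.inl ⟨t, ht, rfl⟩)
  have hgM : ∀ t ∈ Icc (-T) T, ‖g t‖ ≤ M := fun t ht => hM (g t) (Or.inr ⟨t, ht, rfl⟩)
  -- the vector field
  set v : ℝ → ℝ × ℝ → ℝ × ℝ := fun _ p => (p.1 * p.2, -p.1 ^ 2 - 1) with hv_def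
  have hlip : ∀ t : ℝ, LipschitzOnWith (Real.toNNReal (2 * M)) (v t)
      (closedBall (0 : ℝ × ℝ) M) := by
    intro t
    rw [lipschitzOnWith_iff_dist_le_mul]
    intro p hp q hq
    rw [mem_closedBall_zero_iff, Prod.norm_def, sup_le_iff] at hp hq
    have h1 : |p.1| ≤ M := hp.1
    have h2 : |p.2| ≤ M := hp.2
    have h3 : |q.1| ≤ M := hq.1
    have h4 : |q.2| ≤ M := hq.2
    rw [Prod.dist_eq, Prod.dist_eq, Real.dist_eq, Real.dist_eq, Real.dist_eq, Real.dist_eq]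
    have hD1 : |p.1 - q.1| ≤ max |p.1 - q.1| |p.2 - q.2| := le_max_left _ _
    have hD2 : |p.2 - q.2| ≤ max |p.1 - q.1| |p.2 - q.2| := le_max_right _ _
    rw [Real.coe_toNNReal _ (by positivity)]
    have e1 : |p.1 * p.2 - q.1 * q.2| ≤ 2 * M * max |p.1 - q.1| |p.2 - q.2| := by
      have : p.1 * p.2 - q.1 * q.2 = p.1 * (p.2 - q.2) + q.2 * (p.1 - q.1) := by ring
      rw [this]
      calc |p.1 * (p.2 - q.2) + q.2 * (p.1 - q.1)|
          ≤ |p.1 * (p.2 - q.2)| + |q.2 * (p.1 - q.1)| := abs_add_le _ _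
        _ = |p.1| * |p.2 - q.2| + |q.2| * |p.1 - q.1| := by rw [abs_mul, abs_mul]
        _ ≤ 2 * M * max |p.1 - q.1| |p.2 - q.2| := by
            have hm0 : 0 ≤ max |p.1 - q.1| |p.2 - q.2| := le_trans (abs_nonneg _) hD1
            nlinarith [abs_nonneg (p.2 - q.2), abs_nonneg (p.1 - q.1), abs_nonneg p.1,
              abs_nonneg q.2, mul_le_mul h1 hD2 (abs_nonneg _) hMnn,
              mul_le_mul h4 hD1 (abs_nonneg _) hMnn]
    have e2 : |(-p.1 ^ 2 - 1) - (-q.1 ^ 2 - 1)| ≤ 2 * M * max |p.1 - q.1| |p.2 - q.2| := by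
      have : (-p.1 ^ 2 - 1) - (-q.1 ^ 2 - 1) = -((p.1 + q.1) * (p.1 - q.1)) := by ring
      rw [this, abs_neg, abs_mul]
      have hpq : |p.1 + q.1| ≤ 2 * M := le_trans (abs_add_le _ _) (by linarith)
      have hm0 : 0 ≤ max |p.1 - q.1| |p.2 - q.2| := le_trans (abs_nonneg _) hD1
      nlinarith [abs_nonneg (p.1 + q.1), abs_nonneg (p.1 - q.1),
        mul_le_mul hpq hD1 (abs_nonneg _) (by linarith)]
    exact max_le e1 e2
  -- f and g solve the ODE on Ioo
  have hfode : ∀ t ∈ Ioo (-T) T, HasDerivAt f (v t (f t)) t ∧ f t ∈ closedBall (0 : ℝ × ℝ) M := by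
    intro t ht
    refine ⟨(hx t).prodMk (hy t), ?_⟩
    rw [mem_closedBall_zero_iff]
    exact hfM t (Ioo_subset_Icc_self ht)
  have hgode : ∀ t ∈ Ioo (-T) T, HasDerivAt g (v t (g t)) t ∧ g t ∈ closedBall (0 : ℝ × ℝ) M := by
    intro t ht
    constructor
    · have h1 : HasDerivAt (fun t : ℝ => x (-t)) (x (-t) * y (-t) * (-1)) t :=
        HasDerivAt.comp t (hx (-t)) (hasDerivAt_neg t)
      have h2 : HasDerivAt (fun t : ℝ => -y (-t)) (-((-(x (-t)) ^ 2 - 1) * (-1))) t :=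
        (HasDerivAt.comp t (hy (-t)) (hasDerivAt_neg t)).neg
      have := h1.prodMk h2
      convert this using 2 <;> simp [hv_def, hg_def] <;> ring
    · rw [mem_closedBall_zero_iff]
      exact hgM t (Ioo_subset_Icc_self ht)
  have heq0 : f 0 = g 0 := by
    simp [hf_def, hg_def, h0]
  have := ODE_solution_unique_of_mem_Ioo (fun t _ => hlip t) h0mem hfode hgode heq0 hs₀mem
  have h1 := congrArg Prod.fst this
  have h2 := congrArg Prod.snd this
  simp only [hf_def, hg_def] at h1 h2
  exact ⟨h1.symm, by linarith [h2]⟩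
end

section
/- Let (x, y) solve x'(s) = x(s)y(s), y'(s) = -x(s)^2 - 1 on ℝ (the system with A = 0, B = 1), with x(0) > 0. Then x(s) > 0 for all s, x is integrable on ℝ, and the total curvature satisfies ∫_{-∞}^{∞} x(s) ds < π. -/
open MeasureTheory

/-- If `(x, y)` solves `x' = xy`, `y' = -x² - 1` on `ℝ` (the system with
`A = 0`, `B = 1`) with `x(0) > 0`, then `x > 0` everywhere, `x` is integrable on `ℝ`,
and the total curvature satisfies `∫_{-∞}^{∞} x < π`. -/
theorem stmt_19 (x y : ℝ → ℝ)
    (hx : ∀ s, HasDerivAt x (x s * y s) s)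
    (hy : ∀ s, HasDerivAt y (-(x s) ^ 2 - 1) s)
    (h0 : 0 < x 0) :
    (∀ s, 0 < x s) ∧ Integrable x ∧ (∫ s, x s) < Real.pi := by
  have hycont : Continuous y := continuous_iff_continuousAt.2 fun s => (hy s).continuousAt
  have hxcont : Continuous x := continuous_iff_continuousAt.2 fun s => (hx s).continuousAt
  -- x > 0 everywhere
  set Y : ℝ → ℝ := fun s => ∫ t in (0:ℝ)..s, y t with hYdef
  have hY : ∀ s, HasDerivAt Y (y s) s := fun s =>
    (hycont.integral_hasStrictDerivAt 0 s).hasDerivAt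
  have h1 : ∀ s, HasDerivAt (fun s => x s * Real.exp (-Y s)) 0 s := by
    intro s
    have := (hx s).mul (((hY s).neg).exp)
    refine this.congr_deriv ?_
    ring
  have hconst : ∀ s, x s * Real.exp (-Y s) = x 0 * Real.exp (-Y 0) := by
    intro s
    exact is_const_of_deriv_eq_zero (fun t => ((h1 t).differentiableAt))
      (fun t => (h1 t).deriv) s 0
  have hxpos : ∀ s, 0 < x s := by
    intro s
    have h := hconst s
    nlinarith [Real.exp_pos (-Y s), Real.exp_pos (-Y 0), mul_pos h0 (Real.exp_pos (-Y 0))]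
  -- define f and g
  set g : ℝ → ℝ := fun s => x s / ((x s) ^ 2 + (y s) ^ 2) with hgdef
  set f : ℝ → ℝ := fun s => x s + g s with hfdef
  have hden : ∀ s, 0 < (x s) ^ 2 + (y s) ^ 2 := fun s =>
    add_pos_of_pos_of_nonneg (pow_pos (hxpos s) 2) (sq_nonneg _)
  have hgpos : ∀ s, 0 < g s := fun s => div_pos (hxpos s) (hden s)
  have hfpos : ∀ s, 0 < f s := fun s => add_pos (hxpos s) (hgpos s)
  have hgcont : Continuous g :=
    (hxcont.div ((hxcont.pow 2).add (hycont.pow 2)) (fun s => (hden s).ne'))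
  have hfcont : Continuous f := hxcont.add hgcont
  -- θ and its derivative
  set θ : ℝ → ℝ := fun s => Real.arctan (y s / x s) with hθdef
  have hθ : ∀ s, HasDerivAt θ (-(f s)) s := by
    intro s
    have hq : HasDerivAt (fun s => y s / x s)
        (((-(x s) ^ 2 - 1) * x s - y s * (x s * y s)) / (x s) ^ 2) s :=
      (hy s).div (hx s) (hxpos s).ne'
    have := (Real.hasDerivAt_arctan (y s / x s)).comp s hq
    refine this.congr_deriv ?_
    have hxne : x s ≠ 0 := (hxpos s).ne'
    have hd : (x s) ^ 2 + (y s) ^ 2 ≠ 0 := (hden s).ne'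
    simp only [hfdef, hgdef, Function.comp]
    field_simp
    ring
  have hθbound : ∀ s, -(Real.pi / 2) < θ s ∧ θ s < Real.pi / 2 := fun s =>
    ⟨Real.neg_pi_div_two_lt_arctan _, Real.arctan_lt_pi_div_two _⟩
  -- interval integrals of f
  have hint : ∀ a b : ℝ, (∫ s in a..b, f s) = θ a - θ b := by
    intro a b
    have h := intervalIntegral.integral_eq_sub_of_hasDerivAt
      (f := θ) (f' := fun s => -(f s)) (fun t _ => hθ t)
      ((hfcont.neg).intervalIntegrable a b)
    rw [intervalIntegral.integral_neg] at h
    linarith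
  have hble : ∀ a b : ℝ, (∫ s in a..b, f s) ≤ Real.pi := by
    intro a b
    rw [hint a b]
    have h1 := hθbound a
    have h2 := hθbound b
    linarith
  -- integrability of f
  have hfint : Integrable f := by
    apply MeasureTheory.integrable_of_intervalIntegral_norm_bounded
      (a := fun n : ℕ => -(n : ℝ)) (b := fun n : ℕ => (n : ℝ)) (l := Filter.atTop) Real.pi
      (fun n => (hfcont.integrableOn_Ioc))
      (Filter.tendsto_neg_atBot_iff.mpr tendsto_natCast_atTop_atTop)
      tendsto_natCast_atTop_atTop
    refine Filter.Eventually.of_forall fun n => ?_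
    have hfn : (fun s => ‖f s‖) = f := funext fun s => Real.norm_of_nonneg (hfpos s).le
    rw [hfn]
    exact hble _ _
  have hflim : Filter.Tendsto (fun n : ℕ => ∫ s in (-(n:ℝ))..(n:ℝ), f s) Filter.atTop
      (nhds (∫ s, f s)) :=
    MeasureTheory.intervalIntegral_tendsto_integral hfint
      (Filter.tendsto_neg_atBot_iff.mpr tendsto_natCast_atTop_atTop)
      tendsto_natCast_atTop_atTop
  have hfle : (∫ s, f s) ≤ Real.pi :=
    le_of_tendsto hflim (Filter.Eventually.of_forall fun n => hble _ _)
  -- integrability of g and x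
  have hgint : Integrable g := by
    refine Integrable.mono hfint hgcont.aestronglyMeasurable ?_
    refine Filter.Eventually.of_forall fun s => ?_
    rw [Real.norm_of_nonneg (hgpos s).le, Real.norm_of_nonneg (hfpos s).le]
    have := hxpos s
    simp only [hfdef]
    linarith
  have hxint : Integrable x := by
    have : x = fun s => f s - g s := funext fun s => by simp [hfdef]
    rw [this]
    exact hfint.sub hgint
  refine ⟨hxpos, hxint, ?_⟩
  have hgposint : 0 < ∫ s, g s := by
    rw [MeasureTheory.integral_pos_iff_support_of_nonneg (fun s => (hgpos s).le) hgint]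
    have : Function.support g = Set.univ := by
      ext s; simp [Function.mem_support, (hgpos s).ne']
    rw [this]
    simp
  have hsplit : (∫ s, x s) = (∫ s, f s) - ∫ s, g s := by
    have : x = fun s => f s - g s := funext fun s => by simp [hfdef]
    rw [this, MeasureTheory.integral_sub hfint hgint]
  rw [hsplit]
  linarith
end
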